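/- Let γ = [0; 1, 1, c_3, 1, c_5, 1, c_7, …] be irrational with c_{2n} = 1 for all n, c_1 = 1, and c_{2n+1} ∈ {1,2} for n ≥ 1. Then for every m ∈ ℕ, m(mγ⁻¹ - ⌊mγ⁻¹⌋) > 1/3. -/

import Mathlib

/-- Numerator of the `n`-th convergent of the continued fraction with
partial quotients `c`. -/
def convP (c : ℕ → ℤ) : ℕ → ℤ
  | 0 => c 0
  | 1 => c 1 * c 0 + 1
  | (n + 2) => c (n + 2) * convP c (n + 1) + convP c n

/-- Denominator of the `n`-th convergent of the continued fraction with
partial quotients `c`. -/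
def convQ (c : ℕ → ℤ) : ℕ → ℤ
  | 0 => 1
  | 1 => c 1
  | (n + 2) => c (n + 2) * convQ c (n + 1) + convQ c n

/-- `γ` has (infinite) continued fraction expansion `[c 0; c 1, c 2, ...]`:
all partial quotients with positive index are positive integers, and the
convergents tend to `γ`. -/
def IsCF (γ : ℝ) (c : ℕ → ℤ) : Prop :=
  (∀ n, 1 ≤ n → 1 ≤ c n) ∧
  Filter.Tendsto (fun n => (convP c n : ℝ) / (convQ c n : ℝ)) Filter.atTop (nhds γ)

namespace Stmt17

variable (c : ℕ → ℤ)

lemma convQ_pos (hc : ∀ n, 1 ≤ n → 1 ≤ c n) : ∀ n, 0 < convQ c n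
  | 0 => by simp [convQ]
  | 1 => by have := hc 1 le_rfl; simp only [convQ]; omega
  | (n+2) => by
    have h1 := convQ_pos hc (n+1)
    have h2 := convQ_pos hc n
    have h3 := hc (n+2) (by omega)
    simp only [convQ]
    nlinarith

lemma convP_nonneg (hc : ∀ n, 1 ≤ n → 1 ≤ c n) (hc0 : c 0 = 0) : ∀ n, 0 ≤ convP c n
  | 0 => by simp [convP, hc0]
  | 1 => by simp [convP, hc0]
  | (n+2) => by
    have h1 := convP_nonneg hc hc0 (n+1)
    have h2 := convP_nonneg hc hc0 n
    have h3 := hc (n+2) (by omega)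
    simp only [convP]
    nlinarith

lemma convP_pos (hc : ∀ n, 1 ≤ n → 1 ≤ c n) (hc0 : c 0 = 0) : ∀ n, 0 < convP c (n+1)
  | 0 => by simp [convP, hc0]
  | (n+1) => by
    have h1 := convP_pos hc hc0 n
    have h2 := convP_nonneg c hc hc0 n
    have h3 := hc (n+2) (by omega)
    simp only [convP]
    nlinarith

lemma convP_le_succ (hc : ∀ n, 1 ≤ n → 1 ≤ c n) (hc0 : c 0 = 0) (n : ℕ) :
    convP c (n+1) ≤ convP c (n+2) := by
  have h1 := convP_pos c hc hc0 n
  have h2 := convP_nonneg c hc hc0 n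
  have h3 := hc (n+2) (by omega)
  simp only [convP]
  nlinarith [mul_le_mul_of_nonneg_right (show (1:ℤ) ≤ c (n+2) from h3) h1.le]

lemma convP_unbounded (hc : ∀ n, 1 ≤ n → 1 ≤ c n) (hc0 : c 0 = 0) :
    ∀ n : ℕ, (n : ℤ) ≤ convP c (n+2)
  | 0 => by simpa using (convP_pos c hc hc0 1).le
  | 1 => by
    have h1 := convP_pos c hc hc0 1
    have h2 := convP_pos c hc hc0 0
    have h3 := hc 3 (by omega)
    show (1:ℤ) ≤ convP c 3
    simp only [convP] at *
    nlinarith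
  | (n+2) => by
    have h1 := convP_unbounded hc hc0 (n+1)
    have h2 := convP_unbounded hc hc0 n
    have h3 := hc (n+4) (by omega)
    have h4 := convP_pos c hc hc0 (n+2)
    show ((n:ℤ)+2) ≤ convP c (n+4)
    have h1' : ((n:ℤ)+1) ≤ convP c (n+3) := by exact_mod_cast h1
    have : convP c (n+4) = c (n+4) * convP c (n+3) + convP c (n+2) := rfl
    rw [this]
    have hn : (0:ℤ) ≤ (n:ℤ) := Int.natCast_nonneg n
    have hp2 : 0 < convP c (n+2) := convP_pos c hc hc0 (n+1)
    nlinarith [mul_le_mul_of_nonneg_right (show (1:ℤ) ≤ c (n+4) from h3)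
      (show (0:ℤ) ≤ convP c (n+3) by linarith)]

lemma det : ∀ n, convP c (n+1) * convQ c n - convP c n * convQ c (n+1) = (-1)^n
  | 0 => by simp [convP, convQ]; ring
  | (n+1) => by
    have ih := det n
    show convP c (n+2) * convQ c (n+1) - convP c (n+1) * convQ c (n+2) = (-1)^(n+1)
    simp only [convP, convQ]
    rw [pow_succ]
    linear_combination (-1 : ℤ) * ih

lemma det2 (n : ℕ) :
    convP c (n+2) * convQ c n - convP c n * convQ c (n+2) = c (n+2) * (-1)^n := by
  have h := det c n
  simp only [convP, convQ]
  linear_combination (c (n+2)) * h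

end Stmt17

open Filter Stmt17 in
set_option maxHeartbeats 1600000 in
theorem stmt_17 (γ : ℝ) (hγ : Irrational γ) (c : ℕ → ℤ) (hcf : IsCF γ c)
    (hc0 : c 0 = 0) (hc1 : c 1 = 1)
    (heven : ∀ n, 1 ≤ n → c (2 * n) = 1)
    (hodd : ∀ n, 1 ≤ n → c (2 * n + 1) = 1 ∨ c (2 * n + 1) = 2)
    (m : ℕ) (hm : 0 < m) :
    (m : ℝ) * ((m : ℝ) * γ⁻¹ - (⌊(m : ℝ) * γ⁻¹⌋ : ℝ)) > 1 / 3 := by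
  obtain ⟨hcpos, hlim⟩ := hcf
  have hQZ : ∀ n, 0 < convQ c n := convQ_pos c hcpos
  have hQR : ∀ n, (0:ℝ) < (convQ c n : ℝ) := fun n => by exact_mod_cast hQZ n
  have hPZ : ∀ n, 0 < convP c (n+1) := convP_pos c hcpos hc0
  have hPR : ∀ n, (0:ℝ) < (convP c (n+1) : ℝ) := fun n => by exact_mod_cast hPZ n
  have hPnn : ∀ n, (0:ℝ) ≤ (convP c n : ℝ) := fun n => by
    exact_mod_cast convP_nonneg c hcpos hc0 n
  -- the convergents
  set f : ℕ → ℝ := fun n => (convP c n : ℝ) / (convQ c n : ℝ) with hf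
  have htwo : Tendsto (fun t : ℕ => 2*t) atTop atTop := by
    apply tendsto_atTop_atTop_of_monotone (fun a b h => by omega)
    intro b; exact ⟨b, by omega⟩
  have htwo1 : Tendsto (fun t : ℕ => 2*t+1) atTop atTop := by
    apply tendsto_atTop_atTop_of_monotone (fun a b h => by omega)
    intro b; exact ⟨b, by omega⟩
  -- even convergents are strictly below γ
  have hmonoE : StrictMono (fun t => f (2*t)) := by
    apply strictMono_nat_of_lt_succ
    intro t
    show f (2*t) < f (2*(t+1))
    have h2 : 2*(t+1) = 2*t+2 := by ring
    rw [h2, hf]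
    simp only
    rw [div_lt_div_iff₀ (hQR _) (hQR _)]
    have hd2 := det2 c (2*t)
    have hc' := hcpos (2*t+2) (by omega)
    have hpow : (-1:ℤ)^(2*t) = 1 := by
      rw [pow_mul]; norm_num
    rw [hpow, mul_one] at hd2
    have : convP c (2*t) * convQ c (2*t+2) < convP c (2*t+2) * convQ c (2*t) := by
      nlinarith
    exact_mod_cast this
  have hlow : ∀ t, f (2*t) < γ := by
    intro t
    have hlim2 : Tendsto (fun t => f (2*t)) atTop (nhds γ) := hlim.comp htwo
    exact lt_of_lt_of_le (hmonoE (Nat.lt_succ_self t))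
      (hmonoE.monotone.ge_of_tendsto hlim2 (t+1))
  -- odd convergents are strictly above γ
  have hmonoO : StrictAnti (fun t => f (2*t+1)) := by
    apply strictAnti_nat_of_succ_lt
    intro t
    show f (2*(t+1)+1) < f (2*t+1)
    have h2 : 2*(t+1)+1 = (2*t+1)+2 := by ring
    rw [h2, hf]
    simp only
    rw [div_lt_div_iff₀ (hQR _) (hQR _)]
    have hd2 := det2 c (2*t+1)
    have hc' := hcpos (2*t+1+2) (by omega)
    have hpow : (-1:ℤ)^(2*t+1) = -1 := by
      rw [pow_succ, pow_mul]; norm_num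
    rw [hpow] at hd2
    have : convP c (2*t+1+2) * convQ c (2*t+1) < convP c (2*t+1) * convQ c (2*t+1+2) := by
      nlinarith
    exact_mod_cast this
  have hupp : ∀ t, γ < f (2*t+1) := by
    intro t
    have hlim2 : Tendsto (fun t => f (2*t+1)) atTop (nhds γ) := hlim.comp htwo1
    exact lt_of_le_of_lt (hmonoO.antitone.le_of_tendsto hlim2 (t+1))
      (hmonoO (Nat.lt_succ_self t))
  -- delta
  set d : ℕ → ℝ := fun n => (-1)^n * ((convQ c n : ℝ) * γ - (convP c n : ℝ)) with hd
  have hd_pos : ∀ n, 0 < d n := by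
    intro n
    rcases Nat.even_or_odd n with ⟨t, ht⟩ | ⟨t, ht⟩
    · have h := hlow t
      have h2 : n = 2*t := by omega
      subst h2
      have hpow : (-1:ℝ)^(2*t) = 1 := by rw [pow_mul]; norm_num
      rw [hd]
      simp only [hpow, one_mul]
      rw [hf] at h
      simp only [div_lt_iff₀ (hQR (2*t))] at h
      linarith
    · have h := hupp t
      have h2 : n = 2*t+1 := by omega
      subst h2
      have hpow : (-1:ℝ)^(2*t+1) = -1 := by rw [pow_succ, pow_mul]; norm_num
      rw [hd]
      simp only [hpow]
      rw [hf] at h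
      simp only [lt_div_iff₀ (hQR (2*t+1))] at h
      linarith
  have hγpos : 0 < γ := by
    have h := hd_pos 0
    rw [hd] at h
    simp [convP, convQ, hc0] at h
    linarith
  -- recurrence for d
  have hd_rec : ∀ n, d (n+2) = d n - (c (n+2) : ℝ) * d (n+1) := by
    intro n
    rw [hd]
    show (-1)^(n+2) * ((convQ c (n+2) : ℝ) * γ - (convP c (n+2) : ℝ)) = _
    have e1 : convQ c (n+2) = c (n+2) * convQ c (n+1) + convQ c n := rfl
    have e2 : convP c (n+2) = c (n+2) * convP c (n+1) + convP c n := rfl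
    rw [e1, e2]
    push_cast
    ring
  have hd_dec : ∀ n, d (n+1) < d n := by
    intro n
    have h := hd_pos (n+2)
    rw [hd_rec n] at h
    have hc' : (1:ℝ) ≤ (c (n+2) : ℝ) := by exact_mod_cast hcpos (n+2) (by omega)
    nlinarith [hd_pos (n+1)]
  -- key identity
  have hId : ∀ j, d j * (convP c (j+1) : ℝ) + d (j+1) * (convP c j : ℝ) = γ := by
    intro j
    induction j with
    | zero =>
      rw [hd]
      simp [convP, convQ, hc0]
    | succ j ih =>
      have e2 : convP c (j+2) = c (j+2) * convP c (j+1) + convP c j := rfl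
      rw [hd_rec j, e2]
      push_cast
      linear_combination ih
  -- bound on quotients
  have hc_le2 : ∀ n, 1 ≤ n → c n ≤ 2 := by
    intro n hn
    rcases Nat.even_or_odd n with ⟨t, ht⟩ | ⟨t, ht⟩
    · have h2 : n = 2*t := by omega
      subst h2
      have ht1 : 1 ≤ t := by omega
      have := heven t ht1
      omega
    · have h2 : n = 2*t+1 := by omega
      subst h2
      rcases Nat.eq_zero_or_pos t with h0 | h1
      · subst h0; norm_num [hc1]
      · rcases hodd t h1 with h | h <;> omega
  -- core inequality (I): odd indices ≥ 3
  have hI : ∀ t, 1 ≤ t → γ < 3 * (convP c (2*t+1) : ℝ) * d (2*t+1) := by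
    intro t ht
    have hid := hId (2*t)
    have hrec := hd_rec (2*t)
    have hc2 : c (2*t+2) = 1 := by
      have := heven (t+1) (by omega)
      have h2 : 2*(t+1) = 2*t+2 := by ring
      rwa [h2] at this
    rw [hc2] at hrec
    push_cast at hrec
    have hlt : d (2*t) < 2 * d (2*t+1) := by
      have := hd_pos (2*t+2)
      have := hd_dec (2*t+1)
      linarith
    have hPle : (convP c (2*t) : ℝ) ≤ (convP c (2*t+1) : ℝ) := by
      have : convP c (2*t) ≤ convP c (2*t+1) := by
        have h2 : 2*t = (2*t-1) + 1 := by omega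
        have := convP_le_succ c hcpos hc0 (2*t-1)
        have h3 : 2*t-1+2 = 2*t+1 := by omega
        rw [h3] at this
        rwa [← h2] at this
      exact_mod_cast this
    have hP : (0:ℝ) < (convP c (2*t+1) : ℝ) := hPR (2*t)
    have hdp := hd_pos (2*t+1)
    nlinarith [mul_lt_mul_of_pos_right hlt hP,
      mul_le_mul_of_nonneg_left hPle hdp.le]
  -- core inequality (II): all indices ≥ 2
  have hII : ∀ k, 2 ≤ k → γ < 3 * (convP c k : ℝ) * (d k + d (k+1)) := by
    intro k hk
    obtain ⟨j, rfl⟩ : ∃ j, k = j + 2 := ⟨k - 2, by omega⟩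
    have hid := hId (j+2)
    have hP1 : (convP c (j+3) : ℝ) ≤ 3 * (convP c (j+2) : ℝ) := by
      have hcl : c (j+3) ≤ 2 := hc_le2 (j+3) (by omega)
      have hle : convP c (j+1) ≤ convP c (j+2) := convP_le_succ c hcpos hc0 j
      have hpos : 0 < convP c (j+2) := hPZ (j+1)
      have e : convP c (j+3) = c (j+3) * convP c (j+2) + convP c (j+1) := rfl
      have : convP c (j+3) ≤ 3 * convP c (j+2) := by
        rw [e]
        nlinarith
      exact_mod_cast this
    have hP : (0:ℝ) < (convP c (j+2) : ℝ) := hPR (j+1)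
    have hd1 := hd_pos (j+2)
    have hd2 := hd_pos (j+3)
    nlinarith [mul_le_mul_of_nonneg_left hP1 hd1.le]
  -- choose k with P_k ≤ m < P_{k+1}
  have hex : ∃ n : ℕ, (m : ℤ) < convP c (n+3) := by
    refine ⟨m, ?_⟩
    have := convP_unbounded c hcpos hc0 (m+1)
    push_cast at this ⊢
    have h2 : m+1+2 = m+3 := by omega
    rw [h2] at this
    linarith
  set n0 := Nat.find hex with hn0
  set k := n0 + 2 with hkdef
  have hk2' : (m : ℤ) < convP c (k+1) := by
    have := Nat.find_spec hex
    simpa [hkdef] using this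
  have hk1' : convP c k ≤ (m : ℤ) := by
    rcases Nat.eq_zero_or_pos n0 with h0 | h1
    · rw [hkdef, h0]
      have : convP c 2 = c 2 := by
        simp [convP, hc0]
      rw [this]
      have := heven 1 le_rfl
      norm_num at this
      omega
    · obtain ⟨j, hj⟩ : ∃ j, n0 = j + 1 := ⟨n0 - 1, by omega⟩
      have := Nat.find_min hex (by omega : j < n0)
      have h2 : k = j + 3 := by omega
      rw [h2]
      omega
  have hk : 2 ≤ k := by omega
  -- decomposition
  set p : ℤ := ⌊(m : ℝ) * γ⁻¹⌋ with hpdef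
  have hsqZ : (-1:ℤ)^k * (-1)^k = 1 := by
    rw [← pow_add]
    exact Even.neg_one_pow ⟨k, rfl⟩
  obtain ⟨a, b, hma, hpa⟩ : ∃ a b : ℤ,
      a * convP c k + b * convP c (k+1) = (m:ℤ) ∧
      a * convQ c k + b * convQ c (k+1) = p := by
    refine ⟨(-1)^k * (p * convP c (k+1) - (m:ℤ) * convQ c (k+1)),
      (-1)^k * ((m:ℤ) * convQ c k - p * convP c k), ?_, ?_⟩
    · have hdet := det c k
      linear_combination ((m:ℤ) * (-1:ℤ)^k) * hdet + (m:ℤ) * hsqZ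
    · have hdet := det c k
      linear_combination (p * (-1:ℤ)^k) * hdet + p * hsqZ
  -- positivity of theta
  have hγne : γ ≠ 0 := ne_of_gt hγpos
  have hirr : Irrational ((m:ℝ) * γ⁻¹) := (hγ.inv).natCast_mul (by omega)
  have hfr : 0 < (m:ℝ)*γ⁻¹ - (p:ℝ) := by
    rw [hpdef]
    have hne : (m:ℝ)*γ⁻¹ ≠ ((⌊(m:ℝ)*γ⁻¹⌋ : ℤ) : ℝ) := hirr.ne_int _
    have h := Int.fract_pos.mpr hne
    rwa [← Int.self_sub_floor] at h
  have hθpos : 0 < (m:ℝ) - (p:ℝ)*γ := by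
    have h : (m:ℝ) - (p:ℝ)*γ = γ * ((m:ℝ)*γ⁻¹ - (p:ℝ)) := by
      field_simp
    rw [h]
    exact mul_pos hγpos hfr
  -- theta in terms of a, b, d
  have hmR : (a:ℝ) * (convP c k : ℝ) + (b:ℝ) * (convP c (k+1) : ℝ) = (m:ℝ) := by
    exact_mod_cast hma
  have hpR : (a:ℝ) * (convQ c k : ℝ) + (b:ℝ) * (convQ c (k+1) : ℝ) = (p:ℝ) := by
    exact_mod_cast hpa
  have hsqR : (-1:ℝ)^k * (-1)^k = 1 := by
    rw [← pow_add]
    exact Even.neg_one_pow ⟨k, rfl⟩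
  have hθ : (m:ℝ) - (p:ℝ)*γ = (-1:ℝ)^k * ((b:ℝ) * d (k+1) - (a:ℝ) * d k) := by
    rw [hd]
    simp only
    linear_combination (-1 : ℝ) * hmR + γ * hpR +
      ((b:ℝ)*((convQ c (k+1):ℝ)*γ - (convP c (k+1):ℝ)) +
       (a:ℝ)*((convQ c k:ℝ)*γ - (convP c k:ℝ))) * hsqR
  -- reduce the goal
  have hinv : γ⁻¹ * γ = 1 := inv_mul_cancel₀ hγne
  rw [gt_iff_lt, show (m:ℝ) * ((m : ℝ) * γ⁻¹ - (⌊(m : ℝ) * γ⁻¹⌋ : ℝ))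
      = ((m:ℝ) * ((m:ℝ) - (p:ℝ)*γ))/γ by
    rw [← hpdef, eq_div_iff hγne]
    linear_combination ((m:ℝ)*(m:ℝ)) * hinv]
  rw [div_lt_div_iff₀ (by norm_num) hγpos]
  rw [one_mul]
  -- goal : γ < 3 * ((m:ℝ) * ((m:ℝ) - (p:ℝ)*γ))
  have hPkR : (0:ℝ) < (convP c k : ℝ) := by
    rw [hkdef]
    exact hPR (n0+1)
  have hmRge : (convP c k : ℝ) ≤ (m:ℝ) := by exact_mod_cast hk1'
  rcases eq_or_ne b 0 with hb | hb
  · -- b = 0 : pure convergent case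
    subst hb
    simp only [zero_mul, add_zero] at hma
    simp only [Int.cast_zero, zero_mul, add_zero, zero_sub] at hmR hθ
    have ha1 : 1 ≤ a := by
      by_contra h
      push_neg at h
      have ha0 : a ≤ 0 := by omega
      have : a * convP c k ≤ 0 := mul_nonpos_of_nonpos_of_nonneg ha0
        (convP_nonneg c hcpos hc0 k)
      omega
    have ha1R : (1:ℝ) ≤ (a:ℝ) := by exact_mod_cast ha1
    rcases Nat.even_or_odd k with ⟨t, ht⟩ | ⟨t, ht⟩
    · -- k even: contradiction with positivity
      exfalso
      have hpow : (-1:ℝ)^k = 1 := Even.neg_one_pow ⟨t, ht⟩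
      rw [hpow, one_mul] at hθ
      have hdk := hd_pos k
      nlinarith [mul_le_mul_of_nonneg_right ha1R hdk.le]
    · -- k odd
      have hkt : k = 2*t+1 := by omega
      have ht1 : 1 ≤ t := by omega
      have hpow : (-1:ℝ)^k = -1 := Odd.neg_one_pow ⟨t, by omega⟩
      rw [hpow] at hθ
      have hθ' : (m:ℝ) - (p:ℝ)*γ = (a:ℝ) * d k := by linarith [hθ]
      clear hθ
      have hIk : γ < 3 * (convP c k : ℝ) * d k := by
        rw [hkt]
        exact hI t ht1
      have hdk := hd_pos k
      rw [hθ', ← hmR]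
      nlinarith [mul_nonneg (mul_nonneg (sub_nonneg.mpr ha1R)
        (by linarith : (0:ℝ) ≤ (a:ℝ) + 1)) (mul_pos hPkR hdk).le]
  · -- b ≠ 0 : mixed case
    have hPk1Z : 0 < convP c (k+1) := hPZ k
    have hPkZ : 0 < convP c k := by
      rw [hkdef]
      exact hPZ (n0+1)
    have hmix : d k + d (k+1) ≤ (m:ℝ) - (p:ℝ)*γ := by
      -- first rule out same-sign cases
      have hcase : (1 ≤ a ∧ b ≤ -1) ∨ (a ≤ -1 ∧ 1 ≤ b) := by
        rcases lt_or_gt_of_ne hb with hbneg | hbpos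
        · -- b ≤ -1 : need a ≥ 1
          left
          refine ⟨?_, by omega⟩
          by_contra h
          push_neg at h
          have ha0 : a ≤ 0 := by omega
          have h1 : a * convP c k ≤ 0 := mul_nonpos_of_nonpos_of_nonneg ha0 hPkZ.le
          have h2 : b * convP c (k+1) ≤ -convP c (k+1) := by nlinarith
          omega
        · -- b ≥ 1 : need a ≤ -1
          right
          refine ⟨?_, by omega⟩
          by_contra h
          push_neg at h
          have ha0 : 0 ≤ a := by omega
          have h1 : 0 ≤ a * convP c k := mul_nonneg ha0 hPkZ.le
          have h2 : convP c (k+1) ≤ b * convP c (k+1) := by nlinarith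
          omega
      have hdk := hd_pos k
      have hdk1 := hd_pos (k+1)
      rcases hcase with ⟨ha, hbn⟩ | ⟨ha, hbn⟩
      · -- a ≥ 1, b ≤ -1 : inner negative, k must be odd
        have haR : (1:ℝ) ≤ (a:ℝ) := by exact_mod_cast ha
        have hbR : (b:ℝ) ≤ -1 := by exact_mod_cast hbn
        have hinner : (b:ℝ) * d (k+1) - (a:ℝ) * d k ≤ -(d k + d (k+1)) := by
          have t1 : (b:ℝ) * d (k+1) ≤ -1 * d (k+1) :=
            mul_le_mul_of_nonneg_right hbR hdk1.le
          have t2 : 1 * d k ≤ (a:ℝ) * d k :=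
            mul_le_mul_of_nonneg_right haR hdk.le
          linarith
        rcases Nat.even_or_odd k with ⟨t, ht⟩ | ⟨t, ht⟩
        · exfalso
          have hpow : (-1:ℝ)^k = 1 := Even.neg_one_pow ⟨t, ht⟩
          rw [hpow, one_mul] at hθ
          linarith
        · have hpow : (-1:ℝ)^k = -1 := Odd.neg_one_pow ⟨t, by omega⟩
          rw [hpow] at hθ
          linarith
      · -- a ≤ -1, b ≥ 1 : inner positive, k must be even
        have haR : (a:ℝ) ≤ -1 := by exact_mod_cast ha
        have hbR : (1:ℝ) ≤ (b:ℝ) := by exact_mod_cast hbn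
        have hinner : d k + d (k+1) ≤ (b:ℝ) * d (k+1) - (a:ℝ) * d k := by
          have t1 : 1 * d (k+1) ≤ (b:ℝ) * d (k+1) :=
            mul_le_mul_of_nonneg_right hbR hdk1.le
          have t2 : (a:ℝ) * d k ≤ -1 * d k :=
            mul_le_mul_of_nonneg_right haR hdk.le
          linarith
        rcases Nat.even_or_odd k with ⟨t, ht⟩ | ⟨t, ht⟩
        · have hpow : (-1:ℝ)^k = 1 := Even.neg_one_pow ⟨t, ht⟩
          rw [hpow, one_mul] at hθ
          linarith
        · exfalso
          have hpow : (-1:ℝ)^k = -1 := Odd.neg_one_pow ⟨t, by omega⟩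
          rw [hpow] at hθ
          linarith
    have hIIk := hII k hk
    have h1 : (convP c k : ℝ) * (d k + d (k+1)) ≤ (convP c k : ℝ) * ((m:ℝ) - (p:ℝ)*γ) :=
      mul_le_mul_of_nonneg_left hmix hPkR.le
    have h2 : (convP c k : ℝ) * ((m:ℝ) - (p:ℝ)*γ) ≤ (m:ℝ) * ((m:ℝ) - (p:ℝ)*γ) :=
      mul_le_mul_of_nonneg_right hmRge hθpos.le
    nlinarith
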